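/- arXiv:0707.3091 — 4 statements merged into one kernel-verified Lean document; each statement's English description precedes it below -/
import Mathlib

section
/- If four points p₁, p₂, p₃, p₄ on the sphere of radius 1/2 in ℝ³ satisfy Σ_{1 ≤ i < j ≤ 4} d(p_i,p_j) = 2π (where d is the intrinsic distance), then the four points form two antipodal pairs, i.e., after reindexing, p₂ = -p₁ and p₄ = -p₃. -/
open Real

/-- Intrinsic distance on the sphere of radius `1/2` in `ℝ³`. -/
noncomputable def halfSphereDist (p q : EuclideanSpace ℝ (Fin 3)) : ℝ :=
  (1 / 2) * Real.arccos (4 * inner ℝ p q)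

section Aux

open scoped RealInnerProductSpace

variable {E : Type*} [NormedAddCommGroup E] [InnerProductSpace ℝ E]

/-- The angle between two points on the sphere of radius 1/2, viewed as unit vectors. -/
noncomputable def sAng (a b : E) : ℝ := Real.arccos (4 * ⟪a, b⟫)

lemma arccos_le_arccos' {x y : ℝ} (h : x ≤ y) : Real.arccos y ≤ Real.arccos x := by
  rw [Real.arccos, Real.arccos]
  have := Real.monotone_arcsin h
  linarith

lemma sAng_comm (a b : E) : sAng a b = sAng b a := by
  rw [sAng, sAng, real_inner_comm]

lemma inner_self_quarter {a : E} (ha : ‖a‖ = 1/2) : ⟪a, a⟫ = 1/4 := by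
  rw [real_inner_self_eq_norm_sq, ha]; norm_num

lemma inner_abs_le {a b : E} (ha : ‖a‖ = 1/2) (hb : ‖b‖ = 1/2) :
    |4 * ⟪a, b⟫| ≤ 1 := by
  have h := abs_real_inner_le_norm a b
  rw [ha, hb] at h
  rw [abs_mul, show |(4:ℝ)| = 4 by norm_num]
  linarith

lemma cos_sAng {a b : E} (ha : ‖a‖ = 1/2) (hb : ‖b‖ = 1/2) :
    Real.cos (sAng a b) = 4 * ⟪a, b⟫ := by
  have h := abs_le.mp (inner_abs_le ha hb)
  exact Real.cos_arccos h.1 h.2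

lemma sAng_nonneg (a b : E) : 0 ≤ sAng a b := Real.arccos_nonneg _

lemma sAng_le_pi (a b : E) : sAng a b ≤ π := Real.arccos_le_pi _

lemma neg_of_sAng_eq_pi {a b : E} (ha : ‖a‖ = 1/2) (hb : ‖b‖ = 1/2)
    (h : sAng a b = π) : b = -a := by
  have h1 : 4 * ⟪a, b⟫ ≤ -1 := Real.arccos_eq_pi.mp h
  have h2 := abs_le.mp (inner_abs_le ha hb)
  have h3 : ⟪a, b⟫ = -(1/4) := by linarith [h2.1]
  have h4 : ‖a + b‖ ^ 2 = 0 := by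
    rw [norm_add_sq_real, ha, hb, h3]; norm_num
  have h5 : a + b = 0 :=
    norm_eq_zero.mp (pow_eq_zero_iff (n := 2) (by norm_num) |>.mp h4)
  rw [add_comm] at h5
  exact eq_neg_of_add_eq_zero_left h5

lemma sAng_neg_left {a b : E} (h : b = -a) (c : E) : sAng b c = π - sAng a c := by
  rw [sAng, sAng, h, inner_neg_left, show 4 * -⟪a, c⟫ = -(4 * ⟪a, c⟫) by ring,
    Real.arccos_neg]

lemma sAng_self_neg {a b : E} (ha : ‖a‖ = 1/2) (h : b = -a) : sAng a b = π := by
  rw [sAng, h, inner_neg_right, inner_self_quarter ha]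
  norm_num [Real.arccos_neg_one]

/-- Key inequality: spherical cosine bound via Cauchy-Schwarz. -/
lemma key_ineq {a b c : E} (ha : ‖a‖ = 1/2) (hb : ‖b‖ = 1/2) (hc : ‖c‖ = 1/2) :
    Real.cos (sAng a b) * Real.cos (sAng a c) -
      Real.sin (sAng a b) * Real.sin (sAng a c) ≤ 4 * ⟪b, c⟫ := by
  have hab := abs_le.mp (inner_abs_le ha hb)
  have hac := abs_le.mp (inner_abs_le ha hc)
  rw [cos_sAng ha hb, cos_sAng ha hc, sAng, sAng, Real.sin_arccos, Real.sin_arccos]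
  set X : E := b - (4 * ⟪a, b⟫) • a with hX
  set Y : E := c - (4 * ⟪a, c⟫) • a with hY
  have hXX : ⟪X, X⟫ = (1 - (4 * ⟪a, b⟫)^2) / 4 := by
    rw [hX]
    simp only [inner_sub_left, inner_sub_right, real_inner_smul_left, real_inner_smul_right]
    rw [real_inner_comm b a, inner_self_quarter ha, inner_self_quarter hb]
    ring
  have hYY : ⟪Y, Y⟫ = (1 - (4 * ⟪a, c⟫)^2) / 4 := by
    rw [hY]
    simp only [inner_sub_left, inner_sub_right, real_inner_smul_left, real_inner_smul_right]
    rw [real_inner_comm c a, inner_self_quarter ha, inner_self_quarter hc]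
    ring
  have hXY : ⟪X, Y⟫ = (4 * ⟪b, c⟫ - (4 * ⟪a, b⟫) * (4 * ⟪a, c⟫)) / 4 := by
    rw [hX, hY]
    simp only [inner_sub_left, inner_sub_right, real_inner_smul_left, real_inner_smul_right]
    rw [real_inner_comm b a, inner_self_quarter ha]
    ring
  have hCS : -(‖X‖ * ‖Y‖) ≤ ⟪X, Y⟫ := (abs_le.mp (abs_real_inner_le_norm X Y)).1
  have hnX : Real.sqrt (1 - (4 * ⟪a, b⟫)^2) = 2 * ‖X‖ := by
    rw [show (1 - (4 * ⟪a, b⟫)^2) = (2 * ‖X‖)^2 by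
      rw [show ((2:ℝ) * ‖X‖)^2 = 4 * ‖X‖^2 by ring, ← real_inner_self_eq_norm_sq, hXX]; ring]
    exact Real.sqrt_sq (by positivity)
  have hnY : Real.sqrt (1 - (4 * ⟪a, c⟫)^2) = 2 * ‖Y‖ := by
    rw [show (1 - (4 * ⟪a, c⟫)^2) = (2 * ‖Y‖)^2 by
      rw [show ((2:ℝ) * ‖Y‖)^2 = 4 * ‖Y‖^2 by ring, ← real_inner_self_eq_norm_sq, hYY]; ring]
    exact Real.sqrt_sq (by positivity)
  rw [hnX, hnY]
  nlinarith [hCS, hXY]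

/-- Triple inequality: the three pairwise angles of three points sum to at most 2π. -/
lemma tri_ineq {a b c : E} (ha : ‖a‖ = 1/2) (hb : ‖b‖ = 1/2) (hc : ‖c‖ = 1/2) :
    sAng b c ≤ 2 * π - sAng a b - sAng a c := by
  have h1 : 0 ≤ sAng a b := sAng_nonneg a b
  have h2 : 0 ≤ sAng a c := sAng_nonneg a c
  have h3 : sAng a b ≤ π := sAng_le_pi a b
  have h4 : sAng a c ≤ π := sAng_le_pi a c
  by_cases h : sAng a b + sAng a c ≤ π
  · linarith [sAng_le_pi b c]
  · push_neg at h
    have hcos : Real.cos (2 * π - (sAng a b + sAng a c)) ≤ 4 * ⟪b, c⟫ := by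
      rw [Real.cos_two_pi_sub, Real.cos_add]
      exact key_ineq ha hb hc
    have h5 : sAng b c ≤ Real.arccos (Real.cos (2 * π - (sAng a b + sAng a c))) :=
      arccos_le_arccos' hcos
    rw [Real.arccos_cos (by linarith) (by linarith)] at h5
    linarith

/-- Equality case: collinearity relation. -/
lemma eq_col {a b c : E} (ha : ‖a‖ = 1/2) (hb : ‖b‖ = 1/2) (hc : ‖c‖ = 1/2) {β γ : ℝ}
    (h1 : 4 * ⟪a, b⟫ = Real.cos β) (h2 : 4 * ⟪a, c⟫ = Real.cos γ)
    (h3 : 4 * ⟪b, c⟫ = Real.cos β * Real.cos γ - Real.sin β * Real.sin γ) :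
    Real.sin γ • (b - Real.cos β • a) + Real.sin β • (c - Real.cos γ • a) = 0 := by
  have h1' : ⟪a, b⟫ = Real.cos β / 4 := by linarith
  have h2' : ⟪a, c⟫ = Real.cos γ / 4 := by linarith
  have h3' : ⟪b, c⟫ = (Real.cos β * Real.cos γ - Real.sin β * Real.sin γ) / 4 := by linarith
  rw [← @inner_self_eq_zero ℝ]
  simp only [inner_add_left, inner_add_right, inner_sub_left, inner_sub_right,
    real_inner_smul_left, real_inner_smul_right]
  rw [real_inner_comm a b, real_inner_comm a c, real_inner_comm b c]
  rw [inner_self_quarter ha, inner_self_quarter hb, inner_self_quarter hc, h1', h2', h3']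
  linear_combination (-(Real.sin γ)^2/4) * Real.sin_sq_add_cos_sq β +
    (-(Real.sin β)^2/4) * Real.sin_sq_add_cos_sq γ

/-- If one pair is antipodal and the total angle sum is 4π, the other pair is antipodal. -/
lemma pair_helper {a b c d : E} (ha : ‖a‖ = 1/2) (hb : ‖b‖ = 1/2) (hc : ‖c‖ = 1/2)
    (hd : ‖d‖ = 1/2) (h : b = -a)
    (hsum : sAng a b + sAng a c + sAng a d + sAng b c + sAng b d + sAng c d = 4 * π) :
    d = -c := by
  have e1 : sAng a b = π := sAng_self_neg ha h
  have e2 : sAng b c = π - sAng a c := sAng_neg_left h c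
  have e3 : sAng b d = π - sAng a d := sAng_neg_left h d
  have e4 : sAng c d = π := by linarith
  exact neg_of_sAng_eq_pi hc hd e4

end Aux

section Main

open scoped RealInnerProductSpace

/-- If four points on the sphere of radius `1/2` in `ℝ³` have pairwise intrinsic distances
summing to exactly `2π`, then after reindexing they form two antipodal pairs. -/
theorem antipodal_of_sum_pairwise_dist_eq_two_pi (p : Fin 4 → EuclideanSpace ℝ (Fin 3))
    (hp : ∀ i, ‖p i‖ = 1 / 2)
    (hsum : halfSphereDist (p 0) (p 1) + halfSphereDist (p 0) (p 2) +
      halfSphereDist (p 0) (p 3) + halfSphereDist (p 1) (p 2) +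
      halfSphereDist (p 1) (p 3) + halfSphereDist (p 2) (p 3) = 2 * Real.pi) :
    ∃ σ : Equiv.Perm (Fin 4), p (σ 1) = -p (σ 0) ∧ p (σ 3) = -p (σ 2) := by
  have hsum4 : sAng (p 0) (p 1) + sAng (p 0) (p 2) + sAng (p 0) (p 3) + sAng (p 1) (p 2) +
      sAng (p 1) (p 3) + sAng (p 2) (p 3) = 4 * π := by
    simp only [halfSphereDist] at hsum
    simp only [sAng]
    linarith
  -- triple equalities
  have t0 := tri_ineq (hp 0) (hp 1) (hp 2)  -- sAng p1 p2 ≤ 2π - sAng p0 p1 - sAng p0 p2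
  have t1 := tri_ineq (hp 0) (hp 1) (hp 3)
  have t2 := tri_ineq (hp 0) (hp 2) (hp 3)
  have t3 := tri_ineq (hp 1) (hp 2) (hp 3)
  have e012 : sAng (p 0) (p 1) + sAng (p 0) (p 2) + sAng (p 1) (p 2) = 2 * π := by linarith
  have e013 : sAng (p 0) (p 1) + sAng (p 0) (p 3) + sAng (p 1) (p 3) = 2 * π := by linarith
  have e023 : sAng (p 0) (p 2) + sAng (p 0) (p 3) + sAng (p 2) (p 3) = 2 * π := by linarith
  have e123 : sAng (p 1) (p 2) + sAng (p 1) (p 3) + sAng (p 2) (p 3) = 2 * π := by linarith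
  by_cases h01 : sAng (p 0) (p 1) = π
  · have hb : p 1 = -p 0 := neg_of_sAng_eq_pi (hp 0) (hp 1) h01
    have hd : p 3 = -p 2 := pair_helper (hp 0) (hp 1) (hp 2) (hp 3) hb (by linarith)
    exact ⟨Equiv.refl _, hb, hd⟩
  by_cases h02 : sAng (p 0) (p 2) = π
  · have hb : p 2 = -p 0 := neg_of_sAng_eq_pi (hp 0) (hp 2) h02
    have hd : p 3 = -p 1 := by
      apply pair_helper (hp 0) (hp 2) (hp 1) (hp 3) hb
      rw [sAng_comm (p 2) (p 1)]
      linarith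
    exact ⟨⟨![0,2,1,3], ![0,2,1,3], by decide, by decide⟩, hb, hd⟩
  by_cases h03 : sAng (p 0) (p 3) = π
  · have hb : p 3 = -p 0 := neg_of_sAng_eq_pi (hp 0) (hp 3) h03
    have hd : p 2 = -p 1 := by
      apply pair_helper (hp 0) (hp 3) (hp 1) (hp 2) hb
      rw [sAng_comm (p 3) (p 1), sAng_comm (p 3) (p 2)]
      linarith
    exact ⟨⟨![0,3,1,2], ![0,2,3,1], by decide, by decide⟩, hb, hd⟩
  by_cases h12 : sAng (p 1) (p 2) = π
  · have hb : p 2 = -p 1 := neg_of_sAng_eq_pi (hp 1) (hp 2) h12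
    have hd : p 3 = -p 0 := by
      apply pair_helper (hp 1) (hp 2) (hp 0) (hp 3) hb
      rw [sAng_comm (p 1) (p 0), sAng_comm (p 2) (p 0)]
      linarith
    exact ⟨⟨![1,2,0,3], ![2,0,1,3], by decide, by decide⟩, hb, hd⟩
  by_cases h13 : sAng (p 1) (p 3) = π
  · have hb : p 3 = -p 1 := neg_of_sAng_eq_pi (hp 1) (hp 3) h13
    have hd : p 2 = -p 0 := by
      apply pair_helper (hp 1) (hp 3) (hp 0) (hp 2) hb
      rw [sAng_comm (p 1) (p 0), sAng_comm (p 3) (p 0), sAng_comm (p 3) (p 2)]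
      linarith
    exact ⟨⟨![1,3,0,2], ![2,0,3,1], by decide, by decide⟩, hb, hd⟩
  by_cases h23 : sAng (p 2) (p 3) = π
  · have hb : p 3 = -p 2 := neg_of_sAng_eq_pi (hp 2) (hp 3) h23
    have hd : p 1 = -p 0 := by
      apply pair_helper (hp 2) (hp 3) (hp 0) (hp 1) hb
      rw [sAng_comm (p 2) (p 0), sAng_comm (p 2) (p 1), sAng_comm (p 3) (p 0),
        sAng_comm (p 3) (p 1)]
      linarith
    exact ⟨⟨![2,3,0,1], ![2,3,0,1], by decide, by decide⟩, hb, hd⟩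
  -- Case B: no antipodal pair; derive a contradiction.
  exfalso
  have lt01 : sAng (p 0) (p 1) < π := lt_of_le_of_ne (sAng_le_pi _ _) h01
  have lt02 : sAng (p 0) (p 2) < π := lt_of_le_of_ne (sAng_le_pi _ _) h02
  have lt12 : sAng (p 1) (p 2) < π := lt_of_le_of_ne (sAng_le_pi _ _) h12
  have pos01 : 0 < sAng (p 0) (p 1) := by
    rcases (sAng_nonneg (p 0) (p 1)).lt_or_eq with h | h
    · exact h
    · exfalso; linarith [sAng_le_pi (p 1) (p 2)]
  have pos02 : 0 < sAng (p 0) (p 2) := by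
    rcases (sAng_nonneg (p 0) (p 2)).lt_or_eq with h | h
    · exact h
    · exfalso; linarith [sAng_le_pi (p 1) (p 2)]
  have hstt : sAng (p 0) (p 1) + sAng (p 0) (p 2) + sAng (p 0) (p 3) = 2 * π := by linarith
  set s := sAng (p 0) (p 1) with hs
  set t := sAng (p 0) (p 2) with ht
  set t' := sAng (p 0) (p 3) with ht'
  have c01 : 4 * ⟪p 0, p 1⟫ = Real.cos s := (cos_sAng (hp 0) (hp 1)).symm
  have c02 : 4 * ⟪p 0, p 2⟫ = Real.cos t := (cos_sAng (hp 0) (hp 2)).symm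
  have c03 : 4 * ⟪p 0, p 3⟫ = Real.cos t' := (cos_sAng (hp 0) (hp 3)).symm
  have c12 : 4 * ⟪p 1, p 2⟫ = Real.cos s * Real.cos t - Real.sin s * Real.sin t := by
    have hv : sAng (p 1) (p 2) = 2 * π - (s + t) := by linarith
    rw [← cos_sAng (hp 1) (hp 2), hv, Real.cos_two_pi_sub, Real.cos_add]
  have c13 : 4 * ⟪p 1, p 3⟫ = Real.cos s * Real.cos t' - Real.sin s * Real.sin t' := by
    have hv : sAng (p 1) (p 3) = 2 * π - (s + t') := by linarith
    rw [← cos_sAng (hp 1) (hp 3), hv, Real.cos_two_pi_sub, Real.cos_add]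
  have c23 : 4 * ⟪p 2, p 3⟫ = Real.cos s := by
    have hv : sAng (p 2) (p 3) = s := by linarith
    rw [← cos_sAng (hp 2) (hp 3), hv]
  have hv := eq_col (hp 0) (hp 1) (hp 2) c01 c02 c12
  have hw := eq_col (hp 0) (hp 1) (hp 3) c01 c03 c13
  have hvw : ⟪Real.sin t • (p 1 - Real.cos s • p 0) + Real.sin s • (p 2 - Real.cos t • p 0),
      Real.sin t' • (p 1 - Real.cos s • p 0) + Real.sin s • (p 3 - Real.cos t' • p 0)⟫
      = 0 := by
    rw [hv, inner_zero_left]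
  -- expand
  have q10 : ⟪p 1, p 0⟫ = Real.cos s / 4 := by rw [real_inner_comm]; linarith
  have q01 : ⟪p 0, p 1⟫ = Real.cos s / 4 := by linarith
  have q20 : ⟪p 2, p 0⟫ = Real.cos t / 4 := by rw [real_inner_comm]; linarith
  have q03 : ⟪p 0, p 3⟫ = Real.cos t' / 4 := by linarith
  have q13 : ⟪p 1, p 3⟫ = (Real.cos s * Real.cos t' - Real.sin s * Real.sin t') / 4 := by
    linarith
  have q21 : ⟪p 2, p 1⟫ = (Real.cos s * Real.cos t - Real.sin s * Real.sin t) / 4 := by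
    rw [real_inner_comm]; linarith
  have q23 : ⟪p 2, p 3⟫ = Real.cos s / 4 := by linarith
  simp only [inner_add_left, inner_add_right, inner_sub_left, inner_sub_right,
    real_inner_smul_left, real_inner_smul_right] at hvw
  rw [inner_self_quarter (hp 1), inner_self_quarter (hp 0), q10, q01, q20, q03, q13, q21,
    q23] at hvw
  have hc3 : Real.cos t' = Real.cos s * Real.cos t - Real.sin s * Real.sin t := by
    rw [show t' = 2 * π - (s + t) by linarith, Real.cos_two_pi_sub, Real.cos_add]
  have hs3 : Real.sin t' = -(Real.sin s * Real.cos t + Real.cos s * Real.sin t) := by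
    rw [show t' = 2 * π - (s + t) by linarith, Real.sin_two_pi_sub, Real.sin_add]
  rw [hc3, hs3] at hvw
  have hss : 0 < Real.sin s := Real.sin_pos_of_pos_of_lt_pi pos01 lt01
  have hst : 0 < Real.sin t := Real.sin_pos_of_pos_of_lt_pi pos02 lt02
  have hsst : Real.sin s * Real.cos t + Real.cos s * Real.sin t < 0 := by
    have h1 : 0 < Real.sin (s + t - π) :=
      Real.sin_pos_of_pos_of_lt_pi (by linarith) (by linarith)
    have h2 : Real.sin (s + t - π) = -Real.sin (s + t) := Real.sin_sub_pi (s + t) ▸ rfl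
    rw [← Real.sin_add]
    rw [h2] at h1
    linarith
  have key2 : Real.sin s ^ 2 *
      (Real.sin t * (Real.sin s * Real.cos t + Real.cos s * Real.sin t)) = 0 := by
    linear_combination (2:ℝ) * hvw +
      (Real.cos s * Real.sin s ^ 2 / 2) * Real.sin_sq_add_cos_sq t -
      (Real.sin t * (Real.sin s * Real.cos t + Real.cos s * Real.sin t) / 2) *
        Real.sin_sq_add_cos_sq s
  rcases mul_eq_zero.mp key2 with h | h
  · exact absurd h (by positivity)
  · rcases mul_eq_zero.mp h with h' | h'
    · linarith
    · linarith

end Main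
end

section
/- Let R be an algebraic curvature operator on ℝⁿ, viewed as a symmetric bilinear form on Λ²ℝⁿ. If R is 2-positive, i.e., the sum of its two smallest eigenvalues is positive, then R has positive isotropic curvature: for every orthonormal 4-frame e₁, e₂, e₃, e₄ in ℝⁿ, R(e₁∧e₂ + e₃∧e₄, e₁∧e₂ + e₃∧e₄) + R(e₁∧e₃ + e₄∧e₂, e₁∧e₃ + e₄∧e₂) > 0. -/
open scoped RealInnerProductSpace

open Finset in
lemma two_pos_sum_bound {N : ℕ} (hN : 2 ≤ N) (Λ : Fin N → ℝ) (hΛ : Monotone Λ)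
    (t : Fin N → ℝ) (ht0 : ∀ i, 0 ≤ t i) (ht2 : ∀ i, t i ≤ 2)
    (htsum : ∑ i, t i = 4) :
    2 * (Λ ⟨0, by omega⟩ + Λ ⟨1, by omega⟩) ≤ ∑ i, Λ i * t i := by
  set i0 : Fin N := ⟨0, by omega⟩ with hi0
  set i1 : Fin N := ⟨1, by omega⟩ with hi1
  have h01 : Λ i0 ≤ Λ i1 := hΛ (by simp [hi0, hi1, Fin.le_def])
  have hnn : ∀ i ∈ Finset.univ.erase i0, 0 ≤ (Λ i - Λ i1) * t i := by
    intro i hi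
    have hne : i ≠ i0 := (Finset.mem_erase.mp hi).1
    have h1i : i1 ≤ i := by
      have hv : i.val ≠ 0 := fun h => hne (Fin.ext h)
      have : (1:ℕ) ≤ i.val := by omega
      exact this
    have := hΛ h1i
    exact mul_nonneg (by linarith) (ht0 i)
  have h1 : (Λ i0 - Λ i1) * t i0 + ∑ i ∈ Finset.univ.erase i0, (Λ i - Λ i1) * t i
      = ∑ i, (Λ i - Λ i1) * t i := Finset.add_sum_erase _ (fun i => (Λ i - Λ i1) * t i) (Finset.mem_univ i0)
  have h2 : 0 ≤ ∑ i ∈ Finset.univ.erase i0, (Λ i - Λ i1) * t i := Finset.sum_nonneg hnn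
  have h3 : (Λ i0 - Λ i1) * 2 ≤ (Λ i0 - Λ i1) * t i0 := by nlinarith [ht2 i0, ht0 i0]
  have h4 : ∑ i, (Λ i - Λ i1) * t i = ∑ i, Λ i * t i - Λ i1 * 4 := by
    rw [← htsum, Finset.mul_sum, ← Finset.sum_sub_distrib]
    exact Finset.sum_congr rfl fun i _ => by ring
  linarith

lemma key_ineq_s3 {N : ℕ} (hN : 2 ≤ N)
    {V : Type*} [NormedAddCommGroup V] [InnerProductSpace ℝ V] [FiniteDimensional ℝ V]
    (R : V →ₗ[ℝ] V) (hR : LinearMap.IsSymmetric R)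
    (Λ : Fin N → ℝ) (hΛ : Monotone Λ)
    (b : OrthonormalBasis (Fin N) ℝ V) (heig : ∀ i, R (b i) = Λ i • b i)
    (h2pos : 0 < Λ ⟨0, by omega⟩ + Λ ⟨1, by omega⟩)
    (u v : V) (hu : ⟪u, u⟫ = 2) (hv : ⟪v, v⟫ = 2) (huv : ⟪u, v⟫ = 0) :
    0 < ⟪R u, u⟫ + ⟪R v, v⟫ := by
  set a : Fin N → ℝ := fun i => ⟪u, b i⟫ with ha
  set c : Fin N → ℝ := fun i => ⟪v, b i⟫ with hc
  have hbb : ∀ i : Fin N, ⟪b i, b i⟫ = 1 := fun i => by simpa using orthonormal_iff_ite.mp b.orthonormal i i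
  -- Bessel-type bound
  have hbessel : ∀ i, a i ^ 2 + c i ^ 2 ≤ 2 := by
    intro i
    have hnn : (0:ℝ) ≤ ⟪b i - (a i / 2) • u - (c i / 2) • v,
        b i - (a i / 2) • u - (c i / 2) • v⟫ := real_inner_self_nonneg
    have hub : ⟪u, b i⟫ = a i := rfl
    have hvb : ⟪v, b i⟫ = c i := rfl
    have hbu : ⟪b i, u⟫ = a i := by rw [real_inner_comm]
    have hbv : ⟪b i, v⟫ = c i := by rw [real_inner_comm]
    have hvu : ⟪v, u⟫ = 0 := by rw [real_inner_comm]; exact huv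
    simp only [inner_sub_left, inner_sub_right, real_inner_smul_left, real_inner_smul_right,
      hu, hv, huv, hvu, hub, hvb, hbu, hbv, hbb] at hnn
    nlinarith [hnn]
  -- Rayleigh expansion
  have hRu : ∀ x : V, ⟪R x, x⟫ = ∑ i, Λ i * ⟪x, b i⟫ ^ 2 := by
    intro x
    have := b.sum_inner_mul_inner (R x) x
    rw [← this]
    refine Finset.sum_congr rfl fun i _ => ?_
    have h1 : ⟪R x, b i⟫ = Λ i * ⟪x, b i⟫ := by
      rw [hR x (b i), heig, real_inner_smul_right]
    rw [h1, real_inner_comm (b i) x]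
    ring
  have hau : ∑ i, a i ^ 2 = 2 := by
    have := b.sum_inner_mul_inner u u
    rw [hu] at this
    rw [← this]
    refine Finset.sum_congr rfl fun i _ => ?_
    simp only [ha]; rw [real_inner_comm (b i) u]; ring
  have hcv : ∑ i, c i ^ 2 = 2 := by
    have := b.sum_inner_mul_inner v v
    rw [hv] at this
    rw [← this]
    refine Finset.sum_congr rfl fun i _ => ?_
    simp only [hc]; rw [real_inner_comm (b i) v]; ring
  have hsum : ⟪R u, u⟫ + ⟪R v, v⟫ = ∑ i, Λ i * (a i ^ 2 + c i ^ 2) := by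
    rw [hRu u, hRu v, ← Finset.sum_add_distrib]
    exact Finset.sum_congr rfl fun i _ => by ring
  rw [hsum]
  have hb := two_pos_sum_bound hN Λ hΛ (fun i => a i ^ 2 + c i ^ 2)
    (fun i => by positivity) hbessel
    (by rw [Finset.sum_add_distrib, hau, hcv]; norm_num)
  calc (0:ℝ) < 2 * (Λ ⟨0, by omega⟩ + Λ ⟨1, by omega⟩) := by linarith
    _ ≤ _ := hb

/-- A 2-positive algebraic curvature operator (the sum of its two smallest eigenvalues is
positive) has positive isotropic curvature.  Here `V` plays the role of `Λ²ℝⁿ`: `w` is the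
wedge product, pinned down by the standard formula for the induced inner product, and the
eigenvalues of the self-adjoint operator `R` are listed in increasing order by `Λ` along an
orthonormal eigenbasis `b`. -/
theorem positive_isotropic_of_two_positive {n N : ℕ} (hn : 4 ≤ n) (hN : 2 ≤ N)
    {V : Type*} [NormedAddCommGroup V] [InnerProductSpace ℝ V] [FiniteDimensional ℝ V]
    (w : EuclideanSpace ℝ (Fin n) →ₗ[ℝ] EuclideanSpace ℝ (Fin n) →ₗ[ℝ] V)
    (hw : ∀ a b c d : EuclideanSpace ℝ (Fin n),
      ⟪w a b, w c d⟫ = ⟪a, c⟫ * ⟪b, d⟫ - ⟪a, d⟫ * ⟪b, c⟫)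
    (R : V →ₗ[ℝ] V) (hR : LinearMap.IsSymmetric R)
    (Λ : Fin N → ℝ) (hΛ : Monotone Λ)
    (b : OrthonormalBasis (Fin N) ℝ V) (heig : ∀ i, R (b i) = Λ i • b i)
    (h2pos : 0 < Λ ⟨0, by omega⟩ + Λ ⟨1, by omega⟩)
    (e : Fin 4 → EuclideanSpace ℝ (Fin n)) (he : Orthonormal ℝ e) :
    0 < ⟪R (w (e 0) (e 1) + w (e 2) (e 3)), w (e 0) (e 1) + w (e 2) (e 3)⟫ +
        ⟪R (w (e 0) (e 2) + w (e 3) (e 1)), w (e 0) (e 2) + w (e 3) (e 1)⟫ := by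
  have hee : ∀ i j : Fin 4, ⟪e i, e j⟫ = if i = j then 1 else 0 :=
    orthonormal_iff_ite.mp he
  have hP : ∀ i j : Fin 4, i ≠ j → ⟪e i, e j⟫ = 0 := fun i j h => by rw [hee, if_neg h]
  have hD : ∀ i : Fin 4, ⟪e i, e i⟫ = 1 := fun i => by rw [hee, if_pos rfl]
  set u := w (e 0) (e 1) + w (e 2) (e 3) with hu'
  set v := w (e 0) (e 2) + w (e 3) (e 1) with hv'
  have hu : ⟪u, u⟫ = 2 := by
    simp only [hu', inner_add_left, inner_add_right, hw, hD,
      hP 0 1 (by decide), hP 1 0 (by decide), hP 0 2 (by decide), hP 2 0 (by decide),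
      hP 0 3 (by decide), hP 3 0 (by decide), hP 1 2 (by decide), hP 2 1 (by decide),
      hP 1 3 (by decide), hP 3 1 (by decide), hP 2 3 (by decide), hP 3 2 (by decide)]
    norm_num
  have hv : ⟪v, v⟫ = 2 := by
    simp only [hv', inner_add_left, inner_add_right, hw, hD,
      hP 0 1 (by decide), hP 1 0 (by decide), hP 0 2 (by decide), hP 2 0 (by decide),
      hP 0 3 (by decide), hP 3 0 (by decide), hP 1 2 (by decide), hP 2 1 (by decide),
      hP 1 3 (by decide), hP 3 1 (by decide), hP 2 3 (by decide), hP 3 2 (by decide)]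
    norm_num
  have huv : ⟪u, v⟫ = 0 := by
    simp only [hu', hv', inner_add_left, inner_add_right, hw, hD,
      hP 0 1 (by decide), hP 1 0 (by decide), hP 0 2 (by decide), hP 2 0 (by decide),
      hP 0 3 (by decide), hP 3 0 (by decide), hP 1 2 (by decide), hP 2 1 (by decide),
      hP 1 3 (by decide), hP 3 1 (by decide), hP 2 3 (by decide), hP 3 2 (by decide)]
    norm_num
  exact key_ineq_s3 hN R hR Λ hΛ b heig h2pos u v hu hv huv
end

section
/- Let R be an algebraic curvature operator on ℝⁿ whose associated sectional curvatures all lie in the interval (1/4, 1]. Then R has positive isotropic curvature: for all orthonormal vectors e₁, e₂, e₃, e₄, R(e₁∧e₂ + e₃∧e₄, e₁∧e₂ + e₃∧e₄) + R(e₁∧e₃ + e₄∧e₂, e₁∧e₃ + e₄∧e₂) > 0. -/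
set_option maxHeartbeats 1000000


open scoped RealInnerProductSpace

/-- An algebraic curvature operator (a symmetric operator on `Λ²ℝⁿ` satisfying the first
Bianchi identity) whose sectional curvatures all lie in `(1/4, 1]` has positive isotropic
curvature.  Here `V` plays the role of `Λ²ℝⁿ` and `w` is the wedge product, pinned down by
the standard formula for the induced inner product. -/
theorem positive_isotropic_of_quarter_pinched {n : ℕ} (hn : 4 ≤ n)
    {V : Type*} [NormedAddCommGroup V] [InnerProductSpace ℝ V]
    (w : EuclideanSpace ℝ (Fin n) →ₗ[ℝ] EuclideanSpace ℝ (Fin n) →ₗ[ℝ] V)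
    (hw : ∀ a b c d : EuclideanSpace ℝ (Fin n),
      ⟪w a b, w c d⟫ = ⟪a, c⟫ * ⟪b, d⟫ - ⟪a, d⟫ * ⟪b, c⟫)
    (R : V →ₗ[ℝ] V) (hR : LinearMap.IsSymmetric R)
    (hBianchi : ∀ x y z t : EuclideanSpace ℝ (Fin n),
      ⟪R (w x y), w z t⟫ + ⟪R (w y z), w x t⟫ + ⟪R (w z x), w y t⟫ = 0)
    (hpinch : ∀ u v : EuclideanSpace ℝ (Fin n), Orthonormal ℝ ![u, v] →
      1 / 4 < ⟪R (w u v), w u v⟫ ∧ ⟪R (w u v), w u v⟫ ≤ 1)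
    (e : Fin 4 → EuclideanSpace ℝ (Fin n)) (he : Orthonormal ℝ e) :
    0 < ⟪R (w (e 0) (e 1) + w (e 2) (e 3)), w (e 0) (e 1) + w (e 2) (e 3)⟫ +
        ⟪R (w (e 0) (e 2) + w (e 3) (e 1)), w (e 0) (e 2) + w (e 3) (e 1)⟫ := by
  classical
    have hee : ∀ i j, ⟪e i, e j⟫ = if i = j then 1 else 0 := orthonormal_iff_ite.mp he
  have hsymm : ∀ x y z t : EuclideanSpace ℝ (Fin n), ⟪R (w x y), w z t⟫ = ⟪R (w z t), w x y⟫ := by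
    intro x y z t
    rw [hR (w x y) (w z t), real_inner_comm]
  have hanti : ∀ a b : EuclideanSpace ℝ (Fin n), w a b = - w b a := by
    intro a b
    have h0 : ⟪w a b + w b a, w a b + w b a⟫ = 0 := by
      simp only [inner_add_left, inner_add_right, hw]; ring
    have h1 := inner_self_eq_zero.mp h0
    exact eq_neg_of_add_eq_zero_left h1
  have hpair : ∀ u v : EuclideanSpace ℝ (Fin n), ⟪u, u⟫ = 1 → ⟪v, v⟫ = 1 → ⟪u, v⟫ = 0 →
      1 / 4 < ⟪R (w u v), w u v⟫ ∧ ⟪R (w u v), w u v⟫ ≤ 1 := by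
    intro u v h1 h2 h3
    refine hpinch u v ?_
    rw [orthonormal_iff_ite]
    intro i j
    have h3' : ⟪v, u⟫ = 0 := by rw [real_inner_comm]; exact h3
    have hu : ‖u‖ = 1 := by
      have := real_inner_self_eq_norm_sq u; nlinarith [norm_nonneg u]
    have hv : ‖v‖ = 1 := by
      have := real_inner_self_eq_norm_sq v; nlinarith [norm_nonneg v]
    fin_cases i <;> fin_cases j <;>
      simp [Matrix.cons_val_zero, Matrix.cons_val_one, Matrix.head_cons, h1, h2, h3, h3', hu, hv]
  set c : ℝ := (Real.sqrt 2)⁻¹ with hcdef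
  have hc : c * c = 1 / 2 := by
    rw [hcdef, ← mul_inv, Real.mul_self_sqrt (by norm_num : (0:ℝ) ≤ 2)]
    norm_num
  -- Berger step 1: |R(x,y,z,y)| < 3/8 for orthonormal x, y, z
  have b1 : ∀ x y z : EuclideanSpace ℝ (Fin n), ⟪x, x⟫ = 1 → ⟪y, y⟫ = 1 → ⟪z, z⟫ = 1 →
      ⟪x, y⟫ = 0 → ⟪x, z⟫ = 0 → ⟪y, z⟫ = 0 →
      -(3/8) < ⟪R (w x y), w z y⟫ ∧ ⟪R (w x y), w z y⟫ < 3/8 := by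
    intro x y z hx hy hz hxy hxz hyz
    have hzx : ⟪z, x⟫ = 0 := by rw [real_inner_comm]; exact hxz
    have hzy : ⟪z, y⟫ = 0 := by rw [real_inner_comm]; exact hyz
    have hupu : ⟪c • (x + z), c • (x + z)⟫ = 1 := by
      simp only [real_inner_smul_left, real_inner_smul_right, inner_add_left, inner_add_right,
        hx, hz, hxz, hzx]
      linear_combination 2 * hc
    have humu : ⟪c • (x - z), c • (x - z)⟫ = 1 := by
      simp only [real_inner_smul_left, real_inner_smul_right, inner_sub_left, inner_sub_right,
        hx, hz, hxz, hzx]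
      linear_combination 2 * hc
    have hupy : ⟪c • (x + z), y⟫ = 0 := by
      simp only [real_inner_smul_left, inner_add_left, hxy, hzy]; ring
    have humy : ⟪c • (x - z), y⟫ = 0 := by
      simp only [real_inner_smul_left, inner_sub_left, hxy, hzy]; ring
    have hwp : w (c • (x + z)) y = c • (w x y + w z y) := by
      simp [map_add, map_smul]
    have hwm : w (c • (x - z)) y = c • (w x y - w z y) := by
      simp [map_sub, map_smul]
    have hKp := hpair _ y hupu hy hupy
    have hKm := hpair _ y humu hy humy
    have eqp : ⟪R (w (c • (x + z)) y), w (c • (x + z)) y⟫ =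
        (⟪R (w x y), w x y⟫ + ⟪R (w z y), w z y⟫) / 2 + ⟪R (w x y), w z y⟫ := by
      rw [hwp]
      simp only [map_smul, map_add, real_inner_smul_left, real_inner_smul_right,
        inner_add_left, inner_add_right]
      rw [hsymm z y x y]
      linear_combination (⟪R (w x y), w x y⟫ + ⟪R (w z y), w z y⟫ + 2 * ⟪R (w x y), w z y⟫) * hc
    have eqm : ⟪R (w (c • (x - z)) y), w (c • (x - z)) y⟫ =
        (⟪R (w x y), w x y⟫ + ⟪R (w z y), w z y⟫) / 2 - ⟪R (w x y), w z y⟫ := by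
      rw [hwm]
      simp only [map_smul, map_sub, real_inner_smul_left, real_inner_smul_right,
        inner_sub_left, inner_sub_right]
      rw [hsymm z y x y]
      linear_combination (⟪R (w x y), w x y⟫ + ⟪R (w z y), w z y⟫ - 2 * ⟪R (w x y), w z y⟫) * hc
    rw [eqp] at hKp
    rw [eqm] at hKm
    constructor <;> linarith [hKp.1, hKp.2, hKm.1, hKm.2]
  -- Berger step 2: |R(x,y,z,t) + R(x,t,z,y)| < 3/4 for orthonormal x, z, y, t
  have b2 : ∀ x z y t : EuclideanSpace ℝ (Fin n), ⟪x, x⟫ = 1 → ⟪z, z⟫ = 1 → ⟪y, y⟫ = 1 → ⟪t, t⟫ = 1 →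
      ⟪x, z⟫ = 0 → ⟪x, y⟫ = 0 → ⟪x, t⟫ = 0 → ⟪z, y⟫ = 0 → ⟪z, t⟫ = 0 → ⟪y, t⟫ = 0 →
      -(3/4) < ⟪R (w x y), w z t⟫ + ⟪R (w x t), w z y⟫ ∧
      ⟪R (w x y), w z t⟫ + ⟪R (w x t), w z y⟫ < 3/4 := by
    intro x z y t hx hz hy ht hxz hxy hxt hzy hzt hyt
    have hty : ⟪t, y⟫ = 0 := by rw [real_inner_comm]; exact hyt
    have hupu : ⟪c • (y + t), c • (y + t)⟫ = 1 := by
      simp only [real_inner_smul_left, real_inner_smul_right, inner_add_left, inner_add_right,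
        hy, ht, hyt, hty]
      linear_combination 2 * hc
    have humu : ⟪c • (y - t), c • (y - t)⟫ = 1 := by
      simp only [real_inner_smul_left, real_inner_smul_right, inner_sub_left, inner_sub_right,
        hy, ht, hyt, hty]
      linear_combination 2 * hc
    have hxup : ⟪x, c • (y + t)⟫ = 0 := by
      simp only [real_inner_smul_right, inner_add_right, hxy, hxt]; ring
    have hxum : ⟪x, c • (y - t)⟫ = 0 := by
      simp only [real_inner_smul_right, inner_sub_right, hxy, hxt]; ring
    have hupz : ⟪c • (y + t), z⟫ = 0 := by
      have h1 : ⟪y, z⟫ = 0 := by rw [real_inner_comm]; exact hzy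
      have h2 : ⟪t, z⟫ = 0 := by rw [real_inner_comm]; exact hzt
      simp only [real_inner_smul_left, inner_add_left, h1, h2]; ring
    have humz : ⟪c • (y - t), z⟫ = 0 := by
      have h1 : ⟪y, z⟫ = 0 := by rw [real_inner_comm]; exact hzy
      have h2 : ⟪t, z⟫ = 0 := by rw [real_inner_comm]; exact hzt
      simp only [real_inner_smul_left, inner_sub_left, h1, h2]; ring
    have hBp := b1 x (c • (y + t)) z hx hupu hz hxup hxz hupz
    have hBm := b1 x (c • (y - t)) z hx humu hz hxum hxz humz
    have hwxp : w x (c • (y + t)) = c • (w x y + w x t) := by simp [map_add, map_smul]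
    have hwzp : w z (c • (y + t)) = c • (w z y + w z t) := by simp [map_add, map_smul]
    have hwxm : w x (c • (y - t)) = c • (w x y - w x t) := by simp [map_sub, map_smul]
    have hwzm : w z (c • (y - t)) = c • (w z y - w z t) := by simp [map_sub, map_smul]
    have eqp : ⟪R (w x (c • (y + t))), w z (c • (y + t))⟫ =
        (⟪R (w x y), w z y⟫ + ⟪R (w x t), w z t⟫
          + ⟪R (w x y), w z t⟫ + ⟪R (w x t), w z y⟫) / 2 := by
      rw [hwxp, hwzp]
      simp only [map_smul, map_add, real_inner_smul_left, real_inner_smul_right,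
        inner_add_left, inner_add_right]
      linear_combination (⟪R (w x y), w z y⟫ + ⟪R (w x t), w z t⟫
        + ⟪R (w x y), w z t⟫ + ⟪R (w x t), w z y⟫) * hc
    have eqm : ⟪R (w x (c • (y - t))), w z (c • (y - t))⟫ =
        (⟪R (w x y), w z y⟫ + ⟪R (w x t), w z t⟫
          - ⟪R (w x y), w z t⟫ - ⟪R (w x t), w z y⟫) / 2 := by
      rw [hwxm, hwzm]
      simp only [map_smul, map_sub, real_inner_smul_left, real_inner_smul_right,
        inner_sub_left, inner_sub_right]
      linear_combination (⟪R (w x y), w z y⟫ + ⟪R (w x t), w z t⟫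
        - ⟪R (w x y), w z t⟫ - ⟪R (w x t), w z y⟫) * hc
    rw [eqp] at hBp
    rw [eqm] at hBm
    constructor <;> linarith [hBp.1, hBp.2, hBm.1, hBm.2]
  -- inner product facts for the e i
  have h00 : ⟪e 0, e 0⟫ = 1 := by simpa using hee 0 0
  have h11 : ⟪e 1, e 1⟫ = 1 := by simpa using hee 1 1
  have h22 : ⟪e 2, e 2⟫ = 1 := by simpa using hee 2 2
  have h33 : ⟪e 3, e 3⟫ = 1 := by simpa using hee 3 3
  have h01 : ⟪e 0, e 1⟫ = 0 := by simpa using hee 0 1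
  have h02 : ⟪e 0, e 2⟫ = 0 := by simpa using hee 0 2
  have h03 : ⟪e 0, e 3⟫ = 0 := by simpa using hee 0 3
  have h12 : ⟪e 1, e 2⟫ = 0 := by simpa using hee 1 2
  have h13 : ⟪e 1, e 3⟫ = 0 := by simpa using hee 1 3
  have h23 : ⟪e 2, e 3⟫ = 0 := by simpa using hee 2 3
  -- sectional curvatures
  have hK01 := hpair (e 0) (e 1) h00 h11 h01
  have hK23 := hpair (e 2) (e 3) h22 h33 h23
  have hK02 := hpair (e 0) (e 2) h00 h22 h02
  have hK13 := hpair (e 1) (e 3) h11 h33 h13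
  -- Bianchi identity: A + C - B = 0
  have hB := hBianchi (e 0) (e 1) (e 2) (e 3)
  rw [hanti (e 2) (e 0)] at hB
  simp only [map_neg, inner_neg_left] at hB
  rw [hsymm (e 1) (e 2) (e 0) (e 3)] at hB
  -- hB : ⟪R (w (e 0)(e 1)), w (e 2)(e 3)⟫ + ⟪R (w (e 0)(e 3)), w (e 1)(e 2)⟫
  --      - ⟪R (w (e 0)(e 2)), w (e 1)(e 3)⟫ = 0
  -- Berger bounds
  have hS1 := b2 (e 0) (e 1) (e 3) (e 2) h00 h11 h33 h22 h01
    h03 h02 h13 h12 (by rw [real_inner_comm]; exact h23)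
  -- hS1 : bounds on ⟪R (w e0 e3), w e1 e2⟫ + ⟪R (w e0 e2), w e1 e3⟫  (= C + B)
  have hS2 := b2 (e 0) (e 2) (e 1) (e 3) h00 h22 h11 h33 h02 h01 h03
    (by rw [real_inner_comm]; exact h12) h23 h13
  -- hS2 : bounds on ⟪R (w e0 e1), w e2 e3⟫ + ⟪R (w e0 e3), w e2 e1⟫  (= A - C)
  rw [hanti (e 2) (e 1)] at hS2
  simp only [inner_neg_right] at hS2
  -- expand the goal
  rw [hanti (e 3) (e 1)]
  have key : ⟪R (w (e 0) (e 1) + w (e 2) (e 3)), w (e 0) (e 1) + w (e 2) (e 3)⟫ +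
      ⟪R (w (e 0) (e 2) + -w (e 1) (e 3)), w (e 0) (e 2) + -w (e 1) (e 3)⟫ =
      ⟪R (w (e 0) (e 1)), w (e 0) (e 1)⟫ + ⟪R (w (e 2) (e 3)), w (e 2) (e 3)⟫ +
      ⟪R (w (e 0) (e 2)), w (e 0) (e 2)⟫ + ⟪R (w (e 1) (e 3)), w (e 1) (e 3)⟫ +
      2 * ⟪R (w (e 0) (e 1)), w (e 2) (e 3)⟫ - 2 * ⟪R (w (e 0) (e 2)), w (e 1) (e 3)⟫ := by
    simp only [map_add, map_neg, inner_add_left, inner_add_right, inner_neg_left,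
      inner_neg_right]
    rw [hsymm (e 2) (e 3) (e 0) (e 1), hsymm (e 1) (e 3) (e 0) (e 2)]
    ring
  rw [key]
  linarith [hK01.1, hK23.1, hK02.1, hK13.1, hS1.1, hS1.2, hS2.1, hS2.2]
end

section
/- Let (φ_{ij})_{1 ≤ i < j ≤ k} be angles in [0, π] between k unit vectors in ℝⁿ, all satisfying φ_{ij} ≥ π/2 - 2^{-n} with n ≥ 4. Then k ≤ 2^{2n}; more precisely, if unit vectors v₁, …, v_k ∈ ℝⁿ satisfy ⟨v_i, v_j⟩ ≤ sin(2^{-n}) for all i ≠ j, then k ≤ 2^{2n}. -/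
open Real

/-- Packing bound used for Gromov's corank estimate: if `k` unit vectors in `ℝⁿ` (`n ≥ 4`)
have pairwise inner products at most `sin(2^{-n})` (i.e. pairwise angles at least
`π/2 - 2^{-n}`), then `k ≤ 2^{2n}`. -/
theorem packing_bound_near_orthogonal (n k : ℕ) (hn : 4 ≤ n)
    (v : Fin k → EuclideanSpace ℝ (Fin n)) (hv : ∀ i, ‖v i‖ = 1)
    (hangle : ∀ i j, i ≠ j →
      (inner ℝ (v i) (v j) : ℝ) ≤ Real.sin ((2 : ℝ) ^ (-(n : ℤ)))) :
    k ≤ 2 ^ (2 * n) := by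
  classical
  haveI : Nontrivial (EuclideanSpace ℝ (Fin n)) :=
    Module.nontrivial_of_finrank_pos (R := ℝ)
      (by rw [finrank_euclideanSpace_fin]; omega)
  -- ε bound
  have hε : Real.sin ((2:ℝ) ^ (-(n:ℤ))) ≤ 1/2 := by
    have h1 : Real.sin ((2:ℝ) ^ (-(n:ℤ))) ≤ (2:ℝ) ^ (-(n:ℤ)) :=
      Real.sin_le (by positivity)
    have h2 : (2:ℝ) ^ (-(n:ℤ)) ≤ (2:ℝ) ^ (-(1:ℤ)) :=
      zpow_le_zpow_right₀ (by norm_num) (by omega)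
    have h3 : (2:ℝ) ^ (-(1:ℤ)) = 1/2 := by norm_num
    exact le_trans (le_trans h1 h2) (le_of_eq h3)
  -- pairwise distances at least 1
  have hdist : ∀ i j : Fin k, i ≠ j → (1:ℝ) ≤ dist (v i) (v j) := by
    intro i j hij
    have h := hangle i j hij
    have hsq := norm_sub_sq_real (v i) (v j)
    rw [hv i, hv j] at hsq
    have h1 : (1:ℝ) ≤ ‖v i - v j‖ ^ 2 := by nlinarith
    have h2 := norm_nonneg (v i - v j)
    rw [dist_eq_norm]
    nlinarith
  -- disjoint balls
  have hdisj : Pairwise (Function.onFun Disjoint (fun i => Metric.ball (v i) (1/2))) := by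
    intro i j hij
    apply Metric.ball_disjoint_ball
    have := hdist i j hij
    linarith
  -- containment
  have hsub : (⋃ i, Metric.ball (v i) (1/2)) ⊆
      Metric.ball (0 : EuclideanSpace ℝ (Fin n)) (3/2) := by
    intro x hx
    simp only [Set.mem_iUnion, Metric.mem_ball] at hx ⊢
    obtain ⟨i, hi⟩ := hx
    have h1 : dist x 0 ≤ dist x (v i) + dist (v i) 0 := dist_triangle _ _ _
    have h2 : dist (v i) 0 = 1 := by rw [dist_zero_right, hv i]
    linarith
  -- measures
  have hmeas := MeasureTheory.measure_iUnion (μ := MeasureTheory.volume) hdisj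
    (fun i => (Metric.isOpen_ball).measurableSet)
  have h1 : MeasureTheory.volume (⋃ i, Metric.ball (v i) (1/2)) ≤
      MeasureTheory.volume (Metric.ball (0 : EuclideanSpace ℝ (Fin n)) (3/2)) :=
    MeasureTheory.measure_mono hsub
  rw [hmeas] at h1
  have hcenter : ∀ i : Fin k, MeasureTheory.volume (Metric.ball (v i) (1/2)) =
      MeasureTheory.volume (Metric.ball (0 : EuclideanSpace ℝ (Fin n)) (1/2)) := fun i =>
    MeasureTheory.Measure.addHaar_ball_center _ _ _
  rw [tsum_fintype] at h1
  simp only [hcenter, Finset.sum_const, Finset.card_univ, Fintype.card_fin,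
    nsmul_eq_mul] at h1
  -- scale balls
  have hball : ∀ r : ℝ, 0 ≤ r →
      MeasureTheory.volume (Metric.ball (0 : EuclideanSpace ℝ (Fin n)) r) =
      ENNReal.ofReal (r ^ n) *
        MeasureTheory.volume (Metric.ball (0 : EuclideanSpace ℝ (Fin n)) 1) := by
    intro r hr
    rw [MeasureTheory.Measure.addHaar_ball _ _ hr, finrank_euclideanSpace_fin]
  rw [hball (1/2) (by norm_num), hball (3/2) (by norm_num)] at h1
  set c := MeasureTheory.volume (Metric.ball (0 : EuclideanSpace ℝ (Fin n)) 1) with hc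
  have hc0 : c ≠ 0 := (Metric.measure_ball_pos MeasureTheory.volume 0 (by norm_num)).ne'
  have hctop : c ≠ ⊤ := MeasureTheory.measure_ball_lt_top.ne
  rw [← mul_assoc] at h1
  have h2 : (k : ENNReal) * ENNReal.ofReal ((1/2:ℝ) ^ n) ≤
      ENNReal.ofReal ((3/2:ℝ) ^ n) :=
    (ENNReal.mul_le_mul_iff_left hc0 hctop).mp h1
  have hhalf : ENNReal.ofReal ((3/2:ℝ) ^ n) =
      ENNReal.ofReal ((3:ℝ) ^ n) * ENNReal.ofReal ((1/2:ℝ) ^ n) := by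
    rw [← ENNReal.ofReal_mul (by positivity), ← mul_pow]
    norm_num
  rw [hhalf] at h2
  have hh0 : ENNReal.ofReal ((1/2:ℝ) ^ n) ≠ 0 := by
    simp only [ne_eq, ENNReal.ofReal_eq_zero, not_le]
    positivity
  have hhtop : ENNReal.ofReal ((1/2:ℝ) ^ n) ≠ ⊤ := ENNReal.ofReal_ne_top
  have h3 : (k : ENNReal) ≤ ENNReal.ofReal ((3:ℝ) ^ n) :=
    (ENNReal.mul_le_mul_iff_left hh0 hhtop).mp h2
  have h4 : ENNReal.ofReal ((3:ℝ) ^ n) = ((3 ^ n : ℕ) : ENNReal) := by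
    rw [← ENNReal.ofReal_natCast]
    push_cast
    ring_nf
  rw [h4] at h3
  have h5 : k ≤ 3 ^ n := Nat.cast_le.mp h3
  calc k ≤ 3 ^ n := h5
    _ ≤ 4 ^ n := Nat.pow_le_pow_left (by norm_num) n
    _ = 2 ^ (2 * n) := by rw [pow_mul]; norm_num
end
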